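/- Fix an integer N ≥ 4 and positive reals σ_1, …, σ_N. Define c_{k,l}(σ) := tr(ρA) − 2(ρAρ)_{kl}/ρ_{kl}, where A is the (N−1)×(N−1) symmetric tridiagonal matrix with A_{ii} = σ_i² + σ_{i+1}², A_{i,i+1} = A_{i+1,i} = −σ_{i+1}², A_{ij} = 0 for |i−j| ≥ 2, and ρ is the (N−1)×(N−1) matrix with ρ_{ij} = 2·min(i,j)·(N − max(i,j))/N. Then for all k, l with 2 ≤ k ≤ l ≤ N−2, we have c_{k,l}(σ) ≥ 0. -/

import Mathlib

def uu (N : ℕ) (m : Fin N) (i : Fin (N-1)) : ℝ :=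
  (if (i:ℕ) = (m:ℕ) then 1 else 0) - (if (i:ℕ)+1 = (m:ℕ) then 1 else 0)

lemma sum_if_val {n : ℕ} (f : Fin n → ℝ) (c : ℕ) :
    (∑ i : Fin n, if (i:ℕ) = c then f i else 0) = if h : c < n then f ⟨c,h⟩ else 0 := by
  split
  · next h =>
    rw [Finset.sum_eq_single (⟨c,h⟩ : Fin n)]
    · simp
    · intro b _ hb
      rw [if_neg]
      intro hc
      exact hb (Fin.ext hc)
    · simp
  · next h =>
    apply Finset.sum_eq_zero
    intro i _
    rw [if_neg]
    have := i.isLt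
    omega

lemma Adecomp (N : ℕ) (hN : 4 ≤ N) (σ : Fin N → ℝ) (i j : Fin (N-1)) :
    (if i = j then
        σ ⟨i.1, Nat.lt_of_lt_of_le i.isLt (Nat.sub_le N 1)⟩ ^ 2 + σ ⟨i.1 + 1, Nat.add_lt_of_lt_sub i.isLt⟩ ^ 2
      else if i.1 + 1 = j.1 ∨ j.1 + 1 = i.1 then
        -σ ⟨max i.1 j.1, max_lt (Nat.lt_of_lt_of_le i.isLt (Nat.sub_le N 1)) (Nat.lt_of_lt_of_le j.isLt (Nat.sub_le N 1))⟩ ^ 2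
      else 0)
    = ∑ m : Fin N, σ m ^2 * uu N m i * uu N m j := by
  have hi : (i:ℕ) < N := by have := i.isLt; omega
  have hi1 : (i:ℕ)+1 < N := by have := i.isLt; omega
  have key : ∀ m : Fin N, σ m ^2 * uu N m i * uu N m j =
      (if (m:ℕ) = (i:ℕ) then σ m ^2 * uu N m j else 0)
      - (if (m:ℕ) = (i:ℕ)+1 then σ m ^2 * uu N m j else 0) := by
    intro m
    by_cases h1 : (m:ℕ) = (i:ℕ) <;> by_cases h2 : (m:ℕ) = (i:ℕ)+1
    · omega
    · rw [if_pos h1, if_neg h2]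
      simp only [uu]
      rw [if_pos h1.symm, if_neg (show ¬((i:ℕ)+1 = (m:ℕ)) by omega)]
      ring
    · rw [if_neg h1, if_pos h2]
      simp only [uu]
      rw [if_neg (show ¬((i:ℕ) = (m:ℕ)) by omega),
        if_pos (show (i:ℕ)+1 = (m:ℕ) by omega)]
      ring
    · rw [if_neg h1, if_neg h2]
      simp only [uu]
      rw [if_neg (show ¬((i:ℕ) = (m:ℕ)) by omega),
        if_neg (show ¬((i:ℕ)+1 = (m:ℕ)) by omega)]
      ring
  rw [Finset.sum_congr rfl (fun m _ => key m), Finset.sum_sub_distrib,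
    sum_if_val, sum_if_val, dif_pos hi, dif_pos hi1]
  simp only [uu]
  by_cases hij : i = j
  · subst hij
    have e1 : ¬((i:ℕ)+1 = (i:ℕ)) := by omega
    have e2 : ¬((i:ℕ) = (i:ℕ)+1) := by omega
    simp only [if_pos rfl, eq_self_iff_true, if_true, if_neg e1, if_neg e2]
    ring
  · rw [if_neg hij]
    have hij' : (i:ℕ) ≠ (j:ℕ) := fun h => hij (Fin.ext h)
    by_cases h1 : (i:ℕ)+1 = (j:ℕ)
    · rw [if_pos (Or.inl h1)]
      rw [if_neg (show ¬((j:ℕ) = (i:ℕ)) by omega),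
        if_neg (show ¬((j:ℕ)+1 = (i:ℕ)) by omega),
        if_pos (show (j:ℕ) = (i:ℕ)+1 by omega),
        if_neg (show ¬((j:ℕ)+1 = (i:ℕ)+1) by omega)]
      simp only [show max (i:ℕ) (j:ℕ) = (i:ℕ)+1 by omega]
      ring
    · by_cases h2 : (j:ℕ)+1 = (i:ℕ)
      · rw [if_pos (Or.inr h2)]
        rw [if_neg (show ¬((j:ℕ) = (i:ℕ)) by omega),
          if_pos (show (j:ℕ)+1 = (i:ℕ) by omega),
          if_neg (show ¬((j:ℕ) = (i:ℕ)+1) by omega),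
          if_neg (show ¬((j:ℕ)+1 = (i:ℕ)+1) by omega)]
        simp only [show max (i:ℕ) (j:ℕ) = (i:ℕ) by omega]
        ring
      · rw [if_neg (show ¬((i:ℕ)+1 = (j:ℕ) ∨ (j:ℕ)+1 = (i:ℕ)) by tauto)]
        rw [if_neg (show ¬((j:ℕ) = (i:ℕ)) by omega),
          if_neg (show ¬((j:ℕ)+1 = (i:ℕ)) by omega),
          if_neg (show ¬((j:ℕ) = (i:ℕ)+1) by omega),
          if_neg (show ¬((j:ℕ)+1 = (i:ℕ)+1) by omega)]
        ring

lemma sum_uu_pick {N : ℕ} (f : Fin (N-1) → ℝ) (m : Fin N) :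
    ∑ i, f i * uu N m i =
      (if h : (m:ℕ) < N-1 then f ⟨m, h⟩ else 0) -
      (if h : 1 ≤ (m:ℕ) then f ⟨(m:ℕ)-1, by have := m.isLt; omega⟩ else 0) := by
  simp only [uu, mul_sub, mul_ite, mul_one, mul_zero, Finset.sum_sub_distrib]
  congr 1
  · exact sum_if_val f m
  · by_cases hm : 1 ≤ (m:ℕ)
    · rw [dif_pos hm]
      rw [show (∑ i : Fin (N-1), if (i:ℕ)+1 = (m:ℕ) then f i else 0)
          = ∑ i : Fin (N-1), if (i:ℕ) = (m:ℕ)-1 then f i else 0 by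
        apply Finset.sum_congr rfl
        intro i _
        by_cases h : (i:ℕ)+1 = (m:ℕ)
        · rw [if_pos h, if_pos (by omega)]
        · rw [if_neg h, if_neg (by omega)]]
      rw [sum_if_val f ((m:ℕ)-1), dif_pos (by have := m.isLt; omega)]
    · rw [dif_neg hm]
      apply Finset.sum_eq_zero
      intro i _
      rw [if_neg (by omega)]

/-- closed form for `∑ i, ρ k i * uu N m i`. -/
lemma rho_pick (N : ℕ) (hN : 4 ≤ N) (k : Fin (N-1)) (m : Fin N) :
    (∑ i : Fin (N-1),
        (2 * (min (k.1 + 1) (i.1 + 1) : ℕ) * ((N : ℝ) - (max (k.1 + 1) (i.1 + 1) : ℕ)) / N)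
          * uu N m i)
    = if (m:ℕ) ≤ (k:ℕ) then 2*((N:ℝ)-((k:ℕ)+1))/N else -(2*((k:ℕ)+1))/N := by
  have hk := k.isLt
  have hm := m.isLt
  have hN0 : (N:ℝ) ≠ 0 := by positivity
  rw [sum_uu_pick]
  by_cases hmk : (m:ℕ) ≤ (k:ℕ)
  · rw [if_pos hmk, dif_pos (show (m:ℕ) < N-1 by omega)]
    by_cases hm1 : 1 ≤ (m:ℕ)
    · rw [dif_pos hm1]
      simp only [show min ((k:ℕ)+1) ((m:ℕ)+1) = (m:ℕ)+1 by omega,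
        show max ((k:ℕ)+1) ((m:ℕ)+1) = (k:ℕ)+1 by omega,
        show min ((k:ℕ)+1) ((m:ℕ)-1+1) = (m:ℕ)-1+1 by omega,
        show max ((k:ℕ)+1) ((m:ℕ)-1+1) = (k:ℕ)+1 by omega]
      push_cast [Nat.sub_add_cancel hm1]
      field_simp
      ring
    · rw [dif_neg hm1]
      simp only [show min ((k:ℕ)+1) ((m:ℕ)+1) = (m:ℕ)+1 by omega,
        show max ((k:ℕ)+1) ((m:ℕ)+1) = (k:ℕ)+1 by omega]
      have : (m:ℕ) = 0 := by omega
      rw [this]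
      push_cast
      ring
  · rw [if_neg hmk, dif_pos (show 1 ≤ (m:ℕ) by omega)]
    by_cases hmN : (m:ℕ) < N-1
    · rw [dif_pos hmN]
      simp only [show min ((k:ℕ)+1) ((m:ℕ)+1) = (k:ℕ)+1 by omega,
        show max ((k:ℕ)+1) ((m:ℕ)+1) = (m:ℕ)+1 by omega,
        show min ((k:ℕ)+1) ((m:ℕ)-1+1) = (k:ℕ)+1 by omega,
        show max ((k:ℕ)+1) ((m:ℕ)-1+1) = (m:ℕ)-1+1 by omega]
      push_cast [Nat.sub_add_cancel (show 1 ≤ (m:ℕ) by omega)]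
      field_simp
      ring
    · rw [dif_neg hmN]
      have hmval : (m:ℕ) = N-1 := by omega
      simp only [hmval, show N-1-1+1 = N-1 by omega,
        show min ((k:ℕ)+1) (N-1) = (k:ℕ)+1 by omega,
        show max ((k:ℕ)+1) (N-1) = N-1 by omega]
      push_cast [Nat.cast_sub (show 1 ≤ N by omega)]
      field_simp
      try ring


noncomputable def FF (N : ℕ) (k : Fin (N-1)) (m : Fin N) : ℝ :=
  if (m:ℕ) ≤ (k:ℕ) then 2*((N:ℝ)-((k:ℕ)+1))/N else -(2*((k:ℕ)+1))/N

lemma rho_pick' (N : ℕ) (hN : 4 ≤ N) (k : Fin (N-1)) (m : Fin N) :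
    (∑ i : Fin (N-1),
        (2 * (min (k.1 + 1) (i.1 + 1) : ℕ) * ((N : ℝ) - (max (k.1 + 1) (i.1 + 1) : ℕ)) / N)
          * uu N m i) = FF N k m := rho_pick N hN k m

lemma swap3 {α β γ : Type*} [Fintype α] [Fintype β] [Fintype γ] (f : α → β → γ → ℝ) :
    (∑ a, ∑ b, ∑ c, f a b c) = ∑ c, ∑ b, ∑ a, f a b c := by
  calc (∑ a, ∑ b, ∑ c, f a b c) = ∑ b, ∑ a, ∑ c, f a b c := Finset.sum_comm
    _ = ∑ b, ∑ c, ∑ a, f a b c := Finset.sum_congr rfl (fun b _ => Finset.sum_comm)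
    _ = ∑ c, ∑ b, ∑ a, f a b c := Finset.sum_comm

lemma entry_eq (N : ℕ) (ρM A : Matrix (Fin (N-1)) (Fin (N-1)) ℝ) (σ : Fin N → ℝ)
    (hA : ∀ i j, A i j = ∑ m : Fin N, σ m ^2 * uu N m i * uu N m j)
    (hsym : ∀ i j, ρM i j = ρM j i) (k l : Fin (N-1)) :
    (ρM * A * ρM) k l
      = ∑ m : Fin N, σ m ^2 * ((∑ i, ρM k i * uu N m i) * (∑ j, ρM l j * uu N m j)) := by
  simp only [Matrix.mul_apply, hA, Finset.sum_mul, Finset.mul_sum]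
  rw [swap3]
  apply Finset.sum_congr rfl
  intro m _
  rw [Finset.sum_comm]
  apply Finset.sum_congr rfl
  intro i _
  apply Finset.sum_congr rfl
  intro j _
  rw [hsym l i]
  ring

lemma trace_eq (N : ℕ) (ρM A : Matrix (Fin (N-1)) (Fin (N-1)) ℝ) (σ : Fin N → ℝ)
    (hA : ∀ i j, A i j = ∑ m : Fin N, σ m ^2 * uu N m i * uu N m j) :
    Matrix.trace (ρM * A)
      = ∑ m : Fin N, σ m ^2 * ∑ i, (∑ j, ρM i j * uu N m j) * uu N m i := by
  simp only [Matrix.trace, Matrix.diag, Matrix.mul_apply, hA, Finset.sum_mul, Finset.mul_sum]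
  rw [swap3]
  apply Finset.sum_congr rfl
  intro m _
  rw [Finset.sum_comm]
  apply Finset.sum_congr rfl
  intro i _
  apply Finset.sum_congr rfl
  intro j _
  ring

set_option maxHeartbeats 1600000 in
theorem ckl_nonneg_interior (N : ℕ) (hN : 4 ≤ N) (σ : Fin N → ℝ) (hσ : ∀ i, 0 < σ i) :
    let A : Matrix (Fin (N - 1)) (Fin (N - 1)) ℝ := fun i j =>
      if i = j then
        σ ⟨i.1, by have := i.isLt; omega⟩ ^ 2 + σ ⟨i.1 + 1, by have := i.isLt; omega⟩ ^ 2
      else if i.1 + 1 = j.1 ∨ j.1 + 1 = i.1 then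
        -σ ⟨max i.1 j.1, by have := i.isLt; have := j.isLt; omega⟩ ^ 2
      else 0
    let ρ : Matrix (Fin (N - 1)) (Fin (N - 1)) ℝ := fun i j =>
      2 * (min (i.1 + 1) (j.1 + 1) : ℕ) * ((N : ℝ) - (max (i.1 + 1) (j.1 + 1) : ℕ)) / N
    ∀ k l : Fin (N - 1), 2 ≤ k.1 + 1 → k ≤ l → l.1 + 1 ≤ N - 2 →
      0 ≤ Matrix.trace (ρ * A) - 2 * (ρ * A * ρ) k l / ρ k l := by
  intro A ρ k l hk hkl hl
  have hkl' : (k:ℕ) ≤ (l:ℕ) := hkl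
  have hkv := k.isLt
  have hlv := l.isLt
  have hN0 : (0:ℝ) < N := by positivity
  have hA : ∀ i j, A i j = ∑ m : Fin N, σ m ^2 * uu N m i * uu N m j :=
    fun i j => Adecomp N hN σ i j
  have hρdef : ∀ i j : Fin (N-1), ρ i j
      = 2 * (min (i.1 + 1) (j.1 + 1) : ℕ) * ((N : ℝ) - (max (i.1 + 1) (j.1 + 1) : ℕ)) / N :=
    fun i j => rfl
  have hsym : ∀ i j, ρ i j = ρ j i := by
    intro i j
    rw [hρdef, hρdef, min_comm, max_comm]
  have hFF : ∀ (k' : Fin (N-1)) (m : Fin N), (∑ i, ρ k' i * uu N m i) = FF N k' m :=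
    fun k' m => rho_pick' N hN k' m
  -- trace formula
  have htr : Matrix.trace (ρ * A) = ∑ m : Fin N, σ m ^2 * (2*((N:ℝ)-1)/N) := by
    rw [trace_eq N ρ A σ hA]
    apply Finset.sum_congr rfl
    intro m _
    congr 1
    rw [Finset.sum_congr rfl (fun i _ => by rw [hFF i m])]
    rw [sum_uu_pick (fun i => FF N i m) m]
    have hm := m.isLt
    by_cases h1 : (m:ℕ) < N-1
    · rw [dif_pos h1]
      by_cases h2 : 1 ≤ (m:ℕ)
      · rw [dif_pos h2]
        simp only [FF]
        rw [if_pos (le_refl _), if_neg (by omega : ¬((m:ℕ) ≤ (m:ℕ)-1))]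
        push_cast [Nat.sub_add_cancel h2, Nat.cast_sub h2]
        field_simp
        ring
      · rw [dif_neg h2]
        simp only [FF]
        rw [if_pos (le_refl _)]
        have : (m:ℕ) = 0 := by omega
        rw [this]
        push_cast
        ring
    · rw [dif_neg h1, dif_pos (by omega : 1 ≤ (m:ℕ))]
      simp only [FF]
      rw [if_neg (by omega : ¬((m:ℕ) ≤ (m:ℕ)-1))]
      have hm2 : (m:ℕ) - 1 = N - 2 := by omega
      rw [hm2]
      push_cast [Nat.cast_sub (show 2 ≤ N by omega)]
      field_simp
      try ring
  -- entry formula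
  have hE : (ρ * A * ρ) k l = ∑ m : Fin N, σ m ^2 * (FF N k m * FF N l m) := by
    rw [entry_eq N ρ A σ hA hsym k l]
    apply Finset.sum_congr rfl
    intro m _
    rw [hFF k m, hFF l m]
  -- value of ρ k l
  have hρkl : ρ k l = 2*(((k:ℕ):ℝ)+1)*((N:ℝ)-(((l:ℕ):ℝ)+1))/N := by
    rw [hρdef k l,
      show min ((k:ℕ)+1) ((l:ℕ)+1) = (k:ℕ)+1 by omega,
      show max ((k:ℕ)+1) ((l:ℕ)+1) = (l:ℕ)+1 by omega]
    push_cast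
    ring
  have hb' : ((l:ℕ):ℝ)+1 ≤ (N:ℝ)-2 := by
    have : (l:ℕ)+1+2 ≤ N := by omega
    have := (Nat.cast_le (α := ℝ)).mpr this
    push_cast at this
    linarith
  have ha' : (2:ℝ) ≤ ((k:ℕ):ℝ)+1 := by exact_mod_cast hk
  have hab' : ((k:ℕ):ℝ) ≤ ((l:ℕ):ℝ) := by exact_mod_cast hkl'
  have hn4 : (4:ℝ) ≤ (N:ℝ) := by exact_mod_cast hN
  have hρpos : 0 < ρ k l := by
    rw [hρkl]
    apply div_pos _ hN0
    apply mul_pos (by linarith)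
    linarith
  rw [sub_nonneg, div_le_iff₀ hρpos, htr, hE, hρkl, Finset.mul_sum, Finset.sum_mul]
  apply Finset.sum_le_sum
  intro m _
  have key : 2 * (FF N k m * FF N l m)
      ≤ (2*((N:ℝ)-1)/N) * (2*(((k:ℕ):ℝ)+1)*((N:ℝ)-(((l:ℕ):ℝ)+1))/N) := by
    set a : ℝ := ((k:ℕ):ℝ)+1 with hadef
    set b : ℝ := ((l:ℕ):ℝ)+1 with hbdef
    set n : ℝ := (N:ℝ) with hndef
    have habr : a ≤ b := by simp only [hadef, hbdef]; linarith
    simp only [FF]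
    by_cases c1 : (m:ℕ) ≤ (k:ℕ)
    · rw [if_pos c1, if_pos (by omega : (m:ℕ) ≤ (l:ℕ))]
      rw [show (2:ℝ) * (2*(n-a)/n * (2*(n-b)/n)) = (8*(n-a)*(n-b))/(n*n) by
          field_simp; ring,
        show (2*(n-1)/n) * (2*a*(n-b)/n) = (4*(n-1)*a*(n-b))/(n*n) by
          field_simp; ring,
        div_le_div_iff₀ (by positivity) (by positivity)]
      have core : 8*(n-a)*(n-b) ≤ 4*(n-1)*a*(n-b) := by
        have h1 : (0:ℝ) ≤ n - b := by linarith
        have h2 : (0:ℝ) ≤ a*(n-1) - 2*(n-a) := by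
          nlinarith [mul_nonneg (by linarith : (0:ℝ) ≤ a-2) (by linarith : (0:ℝ) ≤ n)]
        nlinarith [mul_nonneg h1 h2]
      exact mul_le_mul_of_nonneg_right core (by positivity)
    · by_cases c2 : (m:ℕ) ≤ (l:ℕ)
      · rw [if_neg c1, if_pos c2]
        rw [show (2:ℝ) * (-(2*a)/n * (2*(n-b)/n)) = (-(8*a*(n-b)))/(n*n) by
            field_simp; ring,
          show (2*(n-1)/n) * (2*a*(n-b)/n) = (4*(n-1)*a*(n-b))/(n*n) by
            field_simp; ring,
          div_le_div_iff₀ (by positivity) (by positivity)]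
        have core : -(8*a*(n-b)) ≤ 4*(n-1)*a*(n-b) := by
          have h1 : (0:ℝ) ≤ n - b := by linarith
          have h2 : (0:ℝ) ≤ a := by linarith
          nlinarith [mul_nonneg (mul_nonneg h2 h1) (by linarith : (0:ℝ) ≤ 4*(n-1)+8)]
        exact mul_le_mul_of_nonneg_right core (by positivity)
      · rw [if_neg c1, if_neg c2]
        rw [show (2:ℝ) * (-(2*a)/n * (-(2*b)/n)) = (8*a*b)/(n*n) by
            field_simp; ring,
          show (2*(n-1)/n) * (2*a*(n-b)/n) = (4*(n-1)*a*(n-b))/(n*n) by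
            field_simp; ring,
          div_le_div_iff₀ (by positivity) (by positivity)]
        have core : 8*a*b ≤ 4*(n-1)*a*(n-b) := by
          have h1 : (0:ℝ) ≤ n - b - 2 := by linarith
          have h2 : (0:ℝ) ≤ a := by linarith
          nlinarith [mul_nonneg h2 (mul_nonneg h1 (by linarith : (0:ℝ) ≤ n-1)),
            mul_nonneg h2 (by linarith : (0:ℝ) ≤ n - 1 - b)]
        exact mul_le_mul_of_nonneg_right core (by positivity)
  calc 2 * (σ m ^2 * (FF N k m * FF N l m))
      = σ m ^2 * (2 * (FF N k m * FF N l m)) := by ring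
    _ ≤ σ m ^2 * ((2*((N:ℝ)-1)/N) * (2*(((k:ℕ):ℝ)+1)*((N:ℝ)-(((l:ℕ):ℝ)+1))/N)) :=
        mul_le_mul_of_nonneg_left key (sq_nonneg _)
    _ = σ m ^2 * (2*((N:ℝ)-1)/N) * (2*(((k:ℕ):ℝ)+1)*((N:ℝ)-(((l:ℕ):ℝ)+1))/N) := by ring
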